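/- For every L̄ > 0 there exists a constant C such that for all a, b, c ∈ (0, L̄/2] the function D(a,b,c) := arsinh( sinh(G(a,b,c)) · sinh a / sinh c ) − arsinh( 1/ sinh c ) is differentiable in c and satisfies | ∂D/∂c (a,b,c) | ≤ C·c. (The two individually divergent terms, the hexagon side length arsinh(sinh G · sinh a / sinh c) and the half collar width arsinh(1/sinh c), cancel to first order as c → 0.) -/

import Mathlib

open Real

/-- Inverse hyperbolic cosine: `arcosh x = log(x + √(x² − 1))`. -/
noncomputable def arcosh (x : ℝ) : ℝ := Real.log (x + Real.sqrt (x ^ 2 - 1))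

/-- Length `G(a,b,c)` of the side opposite the side of length `c` in a right-angled geodesic
hexagon in the hyperbolic plane with alternating side lengths `a`, `b`, `c`. -/
noncomputable def hexG (a b c : ℝ) : ℝ :=
  _root_.arcosh ((Real.cosh c + Real.cosh a * Real.cosh b) / (Real.sinh a * Real.sinh b))

/-! ### Auxiliary definitions and lemmas -/

noncomputable def Pf (a b c : ℝ) : ℝ :=
  (Real.cosh c + Real.cosh a * Real.cosh b) ^ 2 - (Real.sinh a * Real.sinh b) ^ 2

noncomputable def hf (a b c : ℝ) : ℝ :=
  Real.sqrt (Pf a b c) + Real.cosh b * Real.cosh c + Real.cosh a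

noncomputable def gf (a b c : ℝ) : ℝ :=
  Real.log (hf a b c) - Real.log (Real.sinh b) - Real.log (1 + Real.cosh c)

lemma sinh_le_mul_cosh {x : ℝ} (hx : 0 ≤ x) : Real.sinh x ≤ x * Real.cosh x := by
  have h : ∀ y : ℝ, HasDerivAt (fun t => t * Real.cosh t - Real.sinh t) (y * Real.sinh y) y := by
    intro y
    have := ((hasDerivAt_id y).mul (Real.hasDerivAt_cosh y)).sub (Real.hasDerivAt_sinh y)
    refine this.congr_deriv ?_
    simp only [id]
    ring
  have hm : MonotoneOn (fun t => t * Real.cosh t - Real.sinh t) (Set.Ici (0:ℝ)) := by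
    apply monotoneOn_of_deriv_nonneg (convex_Ici 0)
    · exact (Continuous.sub (continuous_id.mul Real.continuous_cosh)
        Real.continuous_sinh).continuousOn
    · intro y hy
      exact ((h y).differentiableAt).differentiableWithinAt
    · intro y hy
      rw [(h y).deriv]
      rw [interior_Ici] at hy
      exact mul_nonneg (le_of_lt hy) (Real.sinh_nonneg_iff.mpr (le_of_lt hy))
  have := hm Set.self_mem_Ici hx hx
  simp at this
  linarith

lemma Pf_ge (a b c : ℝ) : (Real.cosh a + Real.cosh b) ^ 2 ≤ Pf a b c := by
  have h1 := Real.cosh_sq a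
  have h2 := Real.cosh_sq b
  have hc := Real.one_le_cosh c
  have hE : 0 ≤ Real.cosh a * Real.cosh b :=
    mul_nonneg (Real.cosh_pos a).le (Real.cosh_pos b).le
  unfold Pf
  nlinarith [sq_nonneg (Real.cosh c - 1), sq_nonneg (Real.sinh a - Real.sinh b)]

lemma Pf_pos (a b c : ℝ) : 0 < Pf a b c :=
  lt_of_lt_of_le (by positivity) (Pf_ge a b c)

lemma sqrt_Pf_ge (a b c : ℝ) : Real.cosh a + Real.cosh b ≤ Real.sqrt (Pf a b c) := by
  have := Real.sqrt_le_sqrt (Pf_ge a b c)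
  rwa [Real.sqrt_sq (by positivity)] at this

lemma hf_pos (a b c : ℝ) : 0 < hf a b c := by
  have h1 := Real.sqrt_nonneg (Pf a b c)
  have := Real.cosh_pos a
  have := Real.cosh_pos b
  have := Real.one_le_cosh c
  unfold hf; nlinarith

lemma D_eq_gf (a b c : ℝ) (ha : 0 < a) (hb : 0 < b) (hc : 0 < c) :
    Real.arsinh (Real.sinh (hexG a b c) * Real.sinh a / Real.sinh c) -
      Real.arsinh (1 / Real.sinh c) = gf a b c := by
  have hsa : 0 < Real.sinh a := Real.sinh_pos_iff.mpr ha
  have hsb : 0 < Real.sinh b := Real.sinh_pos_iff.mpr hb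
  have hsc : 0 < Real.sinh c := Real.sinh_pos_iff.mpr hc
  have hS : 0 < Real.sinh a * Real.sinh b := mul_pos hsa hsb
  set u : ℝ := (Real.cosh c + Real.cosh a * Real.cosh b) / (Real.sinh a * Real.sinh b) with hu_def
  have hcc := Real.one_le_cosh c
  have hPpos := Pf_pos a b c
  have hES : Real.sinh a * Real.sinh b + 1 ≤ Real.cosh a * Real.cosh b := by
    have := Real.one_le_cosh (a - b)
    rw [Real.cosh_sub] at this
    linarith
  have hu1 : 1 < u := by
    rw [hu_def, lt_div_iff₀ hS]
    linarith
  have hu2 : 0 ≤ u ^ 2 - 1 := by nlinarith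
  have hsinhG : Real.sinh (hexG a b c) = Real.sqrt (u ^ 2 - 1) := by
    have hsq := Real.sq_sqrt hu2
    have hsn := Real.sqrt_nonneg (u ^ 2 - 1)
    have ht : (0:ℝ) < u + Real.sqrt (u ^ 2 - 1) := by linarith
    have hinv : (u + Real.sqrt (u ^ 2 - 1))⁻¹ = u - Real.sqrt (u ^ 2 - 1) := by
      apply inv_eq_of_mul_eq_one_right
      nlinarith
    rw [hexG, _root_.arcosh, ← hu_def, Real.sinh_log ht, hinv]
    ring
  have hX : Real.sinh (hexG a b c) * Real.sinh a / Real.sinh c =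
      Real.sqrt (Pf a b c) / (Real.sinh b * Real.sinh c) := by
    rw [hsinhG]
    have h1 : u ^ 2 - 1 = (Real.sqrt (Pf a b c) / (Real.sinh a * Real.sinh b)) ^ 2 := by
      rw [hu_def, div_pow, div_pow, Real.sq_sqrt hPpos.le]
      unfold Pf
      field_simp
    rw [h1, Real.sqrt_sq (by positivity)]
    field_simp
  have hkey : (Real.sinh b * Real.sinh c) ^ 2 + Pf a b c =
      (Real.cosh b * Real.cosh c + Real.cosh a) ^ 2 := by
    unfold Pf
    simp only [mul_pow, Real.sinh_sq]
    ring
  have hfpos := hf_pos a b c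
  have hsbc : 0 < Real.sinh b * Real.sinh c := mul_pos hsb hsc
  have harsinh1 : Real.arsinh (Real.sqrt (Pf a b c) / (Real.sinh b * Real.sinh c)) =
      Real.log (hf a b c) - Real.log (Real.sinh b) - Real.log (Real.sinh c) := by
    have hsq1 : Real.sqrt (1 + (Real.sqrt (Pf a b c) / (Real.sinh b * Real.sinh c)) ^ 2) =
        (Real.cosh b * Real.cosh c + Real.cosh a) / (Real.sinh b * Real.sinh c) := by
      rw [show 1 + (Real.sqrt (Pf a b c) / (Real.sinh b * Real.sinh c)) ^ 2 =
          ((Real.cosh b * Real.cosh c + Real.cosh a) / (Real.sinh b * Real.sinh c)) ^ 2 by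
        rw [div_pow, div_pow, Real.sq_sqrt hPpos.le]
        field_simp
        linear_combination hkey]
      exact Real.sqrt_sq (by positivity)
    have hnum : (0:ℝ) < Real.sqrt (Pf a b c) + (Real.cosh b * Real.cosh c + Real.cosh a) := by
      have h1 := Real.sqrt_nonneg (Pf a b c)
      have := Real.cosh_pos a
      have := Real.cosh_pos b
      have := Real.cosh_pos c
      nlinarith
    rw [Real.arsinh, hsq1, ← add_div, Real.log_div hnum.ne' hsbc.ne',
      Real.log_mul hsb.ne' hsc.ne',
      show hf a b c = Real.sqrt (Pf a b c) + (Real.cosh b * Real.cosh c + Real.cosh a) by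
        unfold hf; ring]
    ring
  have harsinh2 : Real.arsinh (1 / Real.sinh c) =
      Real.log (1 + Real.cosh c) - Real.log (Real.sinh c) := by
    have hsq2 : Real.sqrt (1 + (1 / Real.sinh c) ^ 2) = Real.cosh c / Real.sinh c := by
      rw [show 1 + (1 / Real.sinh c) ^ 2 = (Real.cosh c / Real.sinh c) ^ 2 by
        rw [div_pow, div_pow]
        field_simp
        linear_combination Real.sinh_sq c]
      exact Real.sqrt_sq (by positivity)
    rw [Real.arsinh, hsq2, ← add_div, Real.log_div (by linarith) hsc.ne']
  rw [hX, harsinh1, harsinh2, gf]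
  ring

lemma hasDerivAt_gf (a b c : ℝ) :
    HasDerivAt (gf a b)
      (Real.sinh c * (((Real.cosh c + Real.cosh a * Real.cosh b) / Real.sqrt (Pf a b c)
          + Real.cosh b) / hf a b c - 1 / (1 + Real.cosh c))) c := by
  have hP := Pf_pos a b c
  have hsP : 0 < Real.sqrt (Pf a b c) := Real.sqrt_pos.mpr hP
  have hfp := hf_pos a b c
  have h1c : (0:ℝ) < 1 + Real.cosh c := by have := Real.cosh_pos c; linarith
  have hch := Real.hasDerivAt_cosh c
  have hPd : HasDerivAt (fun c' => Pf a b c')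
      (2 * (Real.cosh c + Real.cosh a * Real.cosh b) ^ 1 * Real.sinh c) c :=
    ((hch.add_const (Real.cosh a * Real.cosh b)).pow 2).sub_const _
  have hsqd : HasDerivAt (fun c' => Real.sqrt (Pf a b c'))
      (1 / (2 * Real.sqrt (Pf a b c)) *
        (2 * (Real.cosh c + Real.cosh a * Real.cosh b) ^ 1 * Real.sinh c)) c :=
    (Real.hasDerivAt_sqrt hP.ne').comp c hPd
  have hhd : HasDerivAt (fun c' => hf a b c')
      (1 / (2 * Real.sqrt (Pf a b c)) *
        (2 * (Real.cosh c + Real.cosh a * Real.cosh b) ^ 1 * Real.sinh c)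
        + Real.cosh b * Real.sinh c) c :=
    (hsqd.add (hch.const_mul (Real.cosh b))).add_const _
  have hl1 := hhd.log hfp.ne'
  have hl2 := (hch.const_add 1).log h1c.ne'
  have hmain : HasDerivAt (gf a b) ((1 / (2 * Real.sqrt (Pf a b c)) *
        (2 * (Real.cosh c + Real.cosh a * Real.cosh b) ^ 1 * Real.sinh c)
        + Real.cosh b * Real.sinh c) / hf a b c - Real.sinh c / (1 + Real.cosh c)) c :=
    (hl1.sub_const (Real.log (Real.sinh b))).sub hl2
  convert hmain using 1
  field_simp

set_option maxHeartbeats 1000000 in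
/-- The difference `D(a,b,c)` between the hexagon side length
`arsinh(sinh G(a,b,c) · sinh a / sinh c)` and the half collar width `arsinh(1/sinh c)`
is differentiable in `c` with `|∂D/∂c| ≤ C c`: the two individually divergent terms
cancel to first order as `c → 0`. -/
theorem hexagon_side_minus_collar_derivative (Lbar : ℝ) (hL : 0 < Lbar) :
    ∃ C : ℝ, ∀ a b c : ℝ,
      a ∈ Set.Ioc 0 (Lbar / 2) → b ∈ Set.Ioc 0 (Lbar / 2) → c ∈ Set.Ioc 0 (Lbar / 2) →
        DifferentiableAt ℝ
          (fun c' => Real.arsinh (Real.sinh (hexG a b c') * Real.sinh a / Real.sinh c') -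
            Real.arsinh (1 / Real.sinh c')) c ∧
        |deriv (fun c' => Real.arsinh (Real.sinh (hexG a b c') * Real.sinh a / Real.sinh c') -
            Real.arsinh (1 / Real.sinh c')) c| ≤ C * c := by
  set M : ℝ := Real.cosh (Lbar / 2) with hM_def
  refine ⟨2 * M ^ 3, ?_⟩
  rintro a b c ⟨ha0, haL⟩ ⟨hb0, hbL⟩ ⟨hc0, hcL⟩
  have hM1 : 1 ≤ M := Real.one_le_cosh _
  have hLpos : (0:ℝ) < Lbar / 2 := by linarith
  have hcosh_le : ∀ x : ℝ, 0 < x → x ≤ Lbar / 2 → Real.cosh x ≤ M := by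
    intro x hx hxL
    rw [hM_def]
    apply Real.cosh_le_cosh.mpr
    rw [abs_of_pos hx, abs_of_pos hLpos]
    exact hxL
  have hMa := hcosh_le a ha0 haL
  have hMb := hcosh_le b hb0 hbL
  have hMc := hcosh_le c hc0 hcL
  have h1a := Real.one_le_cosh a
  have h1b := Real.one_le_cosh b
  have h1c := Real.one_le_cosh c
  -- eventual equality with the smooth closed form `gf`
  have hev : (fun c' => Real.arsinh (Real.sinh (hexG a b c') * Real.sinh a / Real.sinh c') -
      Real.arsinh (1 / Real.sinh c')) =ᶠ[nhds c] gf a b := by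
    filter_upwards [Ioi_mem_nhds hc0] with x hx
    exact D_eq_gf a b x ha0 hb0 hx
  have hg := hasDerivAt_gf a b c
  refine ⟨hg.differentiableAt.congr_of_eventuallyEq hev, ?_⟩
  rw [hev.deriv_eq, hg.deriv]
  clear hev hg
  -- now bound the explicit derivative
  have hsP2 : 2 ≤ Real.sqrt (Pf a b c) := le_trans (by linarith) (sqrt_Pf_ge a b c)
  have hsP0 : 0 < Real.sqrt (Pf a b c) := by linarith
  have hh2 : 2 ≤ hf a b c := by
    unfold hf
    nlinarith [sqrt_Pf_ge a b c, Real.cosh_pos b]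
  have hh0 : 0 < hf a b c := by linarith
  have hs0 : 0 ≤ Real.sinh c := Real.sinh_nonneg_iff.mpr hc0.le
  have hE_le : Real.cosh c + Real.cosh a * Real.cosh b ≤ M + M ^ 2 := by nlinarith
  have hE_pos : 0 < Real.cosh c + Real.cosh a * Real.cosh b := by nlinarith
  set X : ℝ := ((Real.cosh c + Real.cosh a * Real.cosh b) / Real.sqrt (Pf a b c)
      + Real.cosh b) / hf a b c with hX_def
  set Y : ℝ := 1 / (1 + Real.cosh c) with hY_def
  have hX0 : 0 ≤ X := by
    rw [hX_def]
    positivity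
  have hXle : X ≤ ((M + M ^ 2) / 2 + M) / 2 := by
    rw [hX_def]
    have h1 : (Real.cosh c + Real.cosh a * Real.cosh b) / Real.sqrt (Pf a b c)
        ≤ (M + M ^ 2) / 2 :=
      div_le_div₀ (by nlinarith) hE_le two_pos hsP2
    apply div_le_div₀ (by nlinarith) (by linarith) two_pos hh2
  have hY0 : 0 ≤ Y := by rw [hY_def]; positivity
  have hYle : Y ≤ 1 / 2 := by
    rw [hY_def]
    apply div_le_div₀ (by norm_num) le_rfl two_pos (by linarith)
  have habs : |X - Y| ≤ 2 * M ^ 2 := by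
    rw [abs_le]
    constructor
    · nlinarith [hX0, hYle, hM1, sq_nonneg M]
    · nlinarith [hXle, hY0, hM1, sq_nonneg M, sq_nonneg (M - 1)]
  have hsinh_le : Real.sinh c ≤ c * M := by
    have h1 := sinh_le_mul_cosh hc0.le
    nlinarith
  calc |Real.sinh c * (X - Y)| = Real.sinh c * |X - Y| := by
        rw [abs_mul, abs_of_nonneg hs0]
    _ ≤ (c * M) * (2 * M ^ 2) := by
        apply mul_le_mul hsinh_le habs (abs_nonneg _) (by positivity)
    _ = 2 * M ^ 3 * c := by ring
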